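/- Let (A, I, Ω) be a Γ-decomposition algebra over R that is Miyamoto-closed with respect to a subgroup Y of the character group. Then the universal Miyamoto group ŴMiy_Y(A, I, Ω) is a central extension of the Miyamoto group Miy_Y(A, I, Ω); i.e., the canonical epimorphism Φ : ŴMiy_Y(A, I, Ω) → Miy_Y(A, I, Ω) sending t_{i,χ} ↦ τ_{i,χ} has central kernel. -/

import Mathlib

/-- The relators of the universal Miyamoto group: for generators `t_{i,χ}` (with
`χ` ranging over a subgroup `Y` of the character group, and one copy of `Y` for each
index `i`), we impose `t_{i,χ} t_{j,χ'} t_{i,χ}⁻¹ = t_{k,χ'}` whenever the conjugation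
relation `τ_{i,χ} τ_{j,χ''} τ_{i,χ}⁻¹ = τ_{k,χ''}` holds for *all* `χ'' ∈ Y`. -/
def umiyRels {R : Type*} [CommRing R] {A : Type*} [NonUnitalNonAssocRing A] [Module R A]
    {Γ : Type*} [Group Γ] {I : Type*} (Y : Subgroup (Γ →* Rˣ))
    (τ : I → (Γ →* Rˣ) → (A ≃ₗ[R] A)) :
    Set (Monoid.CoprodI (fun _ : I => Y)) :=
  {w | ∃ (i j k : I) (χ χ' : Y),
    (∀ χ'' : Y, τ i (χ : Γ →* Rˣ) * τ j (χ'' : Γ →* Rˣ) * (τ i (χ : Γ →* Rˣ))⁻¹ =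
      τ k (χ'' : Γ →* Rˣ)) ∧
    w = Monoid.CoprodI.of (i := i) χ * Monoid.CoprodI.of (i := j) χ' *
      (Monoid.CoprodI.of (i := i) χ)⁻¹ * (Monoid.CoprodI.of (i := k) χ')⁻¹}

/-- The universal Miyamoto group of a Miyamoto-closed `Γ`-decomposition algebra:
the quotient of the free product of the copies `Y_i` of `Y` by the global conjugation
relators. -/
def UMiy {R : Type*} [CommRing R] {A : Type*} [NonUnitalNonAssocRing A] [Module R A]
    {Γ : Type*} [Group Γ] {I : Type*} (Y : Subgroup (Γ →* Rˣ))
    (τ : I → (Γ →* Rˣ) → (A ≃ₗ[R] A)) : Type _ :=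
  Monoid.CoprodI (fun _ : I => Y) ⧸ Subgroup.normalClosure (umiyRels Y τ)

noncomputable instance {R : Type*} [CommRing R] {A : Type*} [NonUnitalNonAssocRing A]
    [Module R A] {Γ : Type*} [Group Γ] {I : Type*} (Y : Subgroup (Γ →* Rˣ))
    (τ : I → (Γ →* Rˣ) → (A ≃ₗ[R] A)) : Group (UMiy Y τ) :=
  QuotientGroup.Quotient.group _

/-- If `(A, I, Ω)` is a `Γ`-decomposition algebra that is Miyamoto-closed with respect to
a subgroup `Y` of the character group, then the universal Miyamoto group is a central
extension of the Miyamoto group: the canonical epimorphism `t_{i,χ} ↦ τ_{i,χ}` onto the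
subgroup of `Aut A` generated by the Miyamoto maps has central kernel. -/
theorem universal_miyamoto_central_extension {R : Type*} [CommRing R]
    {A : Type*} [NonUnitalNonAssocRing A] [Module R A]
    {Γ : Type*} [Group Γ] {I : Type*}
    (D : I → Γ → Submodule R A)
    (hindep : ∀ i, iSupIndep (D i)) (hsup : ∀ i, ⨆ g, D i g = ⊤)
    (hmul : ∀ i g h, ∀ a ∈ D i g, ∀ b ∈ D i h, a * b ∈ D i (g * h))
    (Y : Subgroup (Γ →* Rˣ))
    (τ : I → (Γ →* Rˣ) → (A ≃ₗ[R] A))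
    (hτ : ∀ i χ g, ∀ a ∈ D i g, τ i χ a = (χ g : R) • a)
    -- Miyamoto-closedness: each Miyamoto map permutes the decompositions
    (hclosed : ∀ i, ∀ χ ∈ Y, ∃ π : Equiv.Perm I, ∀ j g,
      (D j g).map (τ i χ : A →ₗ[R] A) = D (π j) g) :
    ∃ Φ : UMiy Y τ →* (A ≃ₗ[R] A),
      (∀ (i : I) (χ : Y),
        Φ (QuotientGroup.mk (Monoid.CoprodI.of (i := i) χ)) = τ i (χ : Γ →* Rˣ)) ∧
      Φ.ker ≤ Subgroup.center (UMiy Y τ) := by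
  classical
  -- extensionality via the spanning decomposition
  have hext : ∀ (i : I) (f g : A ≃ₗ[R] A),
      (∀ gg, ∀ a ∈ D i gg, f a = g a) → f = g := by
    intro i f g h
    ext a
    have ha : a ∈ (⊤ : Submodule R A) := trivial
    rw [← hsup i] at ha
    refine Submodule.iSup_induction (motive := fun x => f x = g x) _ ha h (by simp) ?_
    intro x y hx hy
    simp [map_add, hx, hy]
  have hone : ∀ i, τ i 1 = 1 := by
    intro i
    refine hext i _ _ ?_
    intro gg a ha
    rw [hτ i 1 gg a ha]
    have h2 : (1 : A ≃ₗ[R] A) a = a := rfl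
    rw [h2]
    simp
  have hmul' : ∀ i (χ χ' : Γ →* Rˣ), τ i (χ * χ') = τ i χ * τ i χ' := by
    intro i χ χ'
    refine hext i _ _ ?_
    intro gg a ha
    have h1 : τ i χ' a = (χ' gg : R) • a := hτ i χ' gg a ha
    have h2 : τ i χ ((χ' gg : R) • a) = (χ gg : R) • ((χ' gg : R) • a) := by
      rw [map_smul, hτ i χ gg a ha, smul_smul, smul_smul, mul_comm]
    show τ i (χ * χ') a = τ i χ (τ i χ' a)
    rw [h1, h2, hτ i (χ * χ') gg a ha]
    simp only [MonoidHom.mul_apply, Units.val_mul, mul_smul]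
  set fY : ∀ _ : I, Y →* (A ≃ₗ[R] A) := fun i =>
    { toFun := fun χ => τ i (χ : Γ →* Rˣ)
      map_one' := by simpa using hone i
      map_mul' := fun χ χ' => by
        show τ i ((χ * χ' : Y) : Γ →* Rˣ) = τ i (χ : Γ →* Rˣ) * τ i (χ' : Γ →* Rˣ)
        have : ((χ * χ' : Y) : Γ →* Rˣ) = (χ : Γ →* Rˣ) * (χ' : Γ →* Rˣ) := rfl
        rw [this, hmul'] } with hfY
  set Φ₀ : Monoid.CoprodI (fun _ : I => Y) →* (A ≃ₗ[R] A) := Monoid.CoprodI.lift fY with hΦ₀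
  have hΦ₀of : ∀ (i : I) (χ : Y), Φ₀ (Monoid.CoprodI.of (i := i) χ) = τ i (χ : Γ →* Rˣ) := by
    intro i χ
    rw [hΦ₀, Monoid.CoprodI.lift_of]
    rfl
  set N := Subgroup.normalClosure (umiyRels Y τ) with hN
  have hrels_ker : umiyRels Y τ ⊆ (Φ₀.ker : Set _) := by
    rintro w ⟨i, j, k, χ, χ', hcond, rfl⟩
    have := hcond χ'
    simp only [SetLike.mem_coe, MonoidHom.mem_ker, map_mul, map_inv, hΦ₀of]
    rw [this]
    group
  have hN_ker : N ≤ Φ₀.ker := Subgroup.normalClosure_le_normal hrels_ker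
  set φ : Monoid.CoprodI (fun _ : I => Y) →* UMiy Y τ := QuotientGroup.mk' N with hφ
  refine ⟨QuotientGroup.lift N Φ₀ hN_ker, ?_, ?_⟩
  · intro i χ
    exact hΦ₀of i χ
  -- key conjugation lemma
  have key : ∀ (v : Monoid.CoprodI (fun _ : I => Y)) (j : I) (χ' : Y), ∃ k : I,
      (∀ χ'' : Y, Φ₀ v * τ j (χ'' : Γ →* Rˣ) * (Φ₀ v)⁻¹ = τ k (χ'' : Γ →* Rˣ)) ∧
      φ (v * Monoid.CoprodI.of (i := j) χ' * v⁻¹) = φ (Monoid.CoprodI.of (i := k) χ') := by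
    intro v
    induction v using Monoid.CoprodI.induction_on with
    | one =>
      intro j χ'
      exact ⟨j, by intro χ''; simp, by simp⟩
    | of i χ =>
      intro j χ'
      obtain ⟨π, hπ⟩ := hclosed i (χ : Γ →* Rˣ) χ.2
      have hconj : ∀ χ'' : Y,
          Φ₀ (Monoid.CoprodI.of (i := i) χ) * τ j (χ'' : Γ →* Rˣ) *
            (Φ₀ (Monoid.CoprodI.of (i := i) χ))⁻¹ = τ (π j) (χ'' : Γ →* Rˣ) := by
        intro χ''
        rw [hΦ₀of]
        refine hext (π j) _ _ ?_
        intro gg a ha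
        rw [← hπ j gg] at ha
        obtain ⟨b, hb, rfl⟩ := ha
        show τ i (χ : Γ →* Rˣ) (τ j (χ'' : Γ →* Rˣ)
            ((τ i (χ : Γ →* Rˣ))⁻¹ (τ i (χ : Γ →* Rˣ) b))) = _
        have hinv : (τ i (χ : Γ →* Rˣ))⁻¹ (τ i (χ : Γ →* Rˣ) b) = b :=
          (τ i (χ : Γ →* Rˣ)).symm_apply_apply b
        rw [hinv, hτ j (χ'' : Γ →* Rˣ) gg b hb, map_smul]
        have hmem : (τ i (χ : Γ →* Rˣ)) b ∈ D (π j) gg := by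
          rw [← hπ j gg]; exact ⟨b, hb, rfl⟩
        exact (hτ (π j) (χ'' : Γ →* Rˣ) gg _ hmem).symm
      refine ⟨π j, hconj, ?_⟩
      have hr : (Monoid.CoprodI.of (i := i) χ * Monoid.CoprodI.of (i := j) χ' *
          (Monoid.CoprodI.of (i := i) χ)⁻¹ * (Monoid.CoprodI.of (i := π j) χ')⁻¹)
          ∈ umiyRels Y τ := by
        refine ⟨i, j, π j, χ, χ', ?_, rfl⟩
        intro χ''
        have := hconj χ''
        rwa [hΦ₀of] at this
      have h1 : φ (Monoid.CoprodI.of (i := i) χ * Monoid.CoprodI.of (i := j) χ' *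
          (Monoid.CoprodI.of (i := i) χ)⁻¹ * (Monoid.CoprodI.of (i := π j) χ')⁻¹) = 1 := by
        rw [hφ]
        exact (QuotientGroup.eq_one_iff _).2 (Subgroup.subset_normalClosure hr)
      simp only [map_mul, map_inv] at h1 ⊢
      exact mul_inv_eq_one.mp h1
    | mul x y hx hy =>
      intro j χ'
      obtain ⟨k₁, h1, q1⟩ := hy j χ'
      obtain ⟨k₂, h2, q2⟩ := hx k₁ χ'
      refine ⟨k₂, ?_, ?_⟩
      · intro χ''
        have e1 := h1 χ''
        have e2 := h2 χ''
        calc Φ₀ (x * y) * τ j (χ'' : Γ →* Rˣ) * (Φ₀ (x * y))⁻¹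
            = Φ₀ x * (Φ₀ y * τ j (χ'' : Γ →* Rˣ) * (Φ₀ y)⁻¹) * (Φ₀ x)⁻¹ := by
              rw [map_mul]; group
          _ = Φ₀ x * τ k₁ (χ'' : Γ →* Rˣ) * (Φ₀ x)⁻¹ := by rw [e1]
          _ = τ k₂ (χ'' : Γ →* Rˣ) := e2
      · have : φ (x * y * Monoid.CoprodI.of (i := j) χ' * (x * y)⁻¹)
            = φ x * φ (y * Monoid.CoprodI.of (i := j) χ' * y⁻¹) * (φ x)⁻¹ := by
          simp only [map_mul, map_inv]; group
        rw [this, q1]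
        have : φ x * φ (Monoid.CoprodI.of (i := k₁) χ') * (φ x)⁻¹
            = φ (x * Monoid.CoprodI.of (i := k₁) χ' * x⁻¹) := by
          simp only [map_mul, map_inv]
        rw [this, q2]
  -- central kernel
  intro w hw
  rw [Subgroup.mem_center_iff]
  obtain ⟨v, rfl⟩ := QuotientGroup.mk'_surjective N w
  have hΦ₀v : Φ₀ v = 1 := by
    have h := hw
    change Φ₀ v = 1 at h
    exact h
  -- w commutes with generators
  have hgen : ∀ (j : I) (χ' : Y),
      φ v * φ (Monoid.CoprodI.of (i := j) χ') = φ (Monoid.CoprodI.of (i := j) χ') * φ v := by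
    intro j χ'
    obtain ⟨k, hconj, hq⟩ := key v j χ'
    have hτeq : ∀ χ'' : Y, τ j (χ'' : Γ →* Rˣ) = τ k (χ'' : Γ →* Rˣ) := by
      intro χ''
      have := hconj χ''
      rwa [hΦ₀v, one_mul, inv_one, mul_one] at this
    -- relator with i = j, χ = 1
    have hr : ((Monoid.CoprodI.of (i := j) (1 : Y)) * Monoid.CoprodI.of (i := j) χ' *
        (Monoid.CoprodI.of (i := j) (1 : Y))⁻¹ * (Monoid.CoprodI.of (i := k) χ')⁻¹)
        ∈ umiyRels Y τ := by
      refine ⟨j, j, k, 1, χ', ?_, rfl⟩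
      intro χ''
      have h1 : ((1 : Y) : Γ →* Rˣ) = 1 := rfl
      rw [h1, hone j, ← hτeq χ'']
      group
    have h1 : φ ((Monoid.CoprodI.of (i := j) (1 : Y)) * Monoid.CoprodI.of (i := j) χ' *
        (Monoid.CoprodI.of (i := j) (1 : Y))⁻¹ * (Monoid.CoprodI.of (i := k) χ')⁻¹) = 1 := by
      rw [hφ]
      exact (QuotientGroup.eq_one_iff _).2 (Subgroup.subset_normalClosure hr)
    have hof1 : Monoid.CoprodI.of (M := fun _ : I => Y) (i := j) (1 : Y) = 1 := by
      exact map_one _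
    rw [hof1] at h1
    simp only [one_mul, inv_one, mul_one, map_mul, map_inv] at h1
    have heq : φ (Monoid.CoprodI.of (i := j) χ') = φ (Monoid.CoprodI.of (i := k) χ') := by
      have := mul_eq_one_iff_eq_inv.mp h1
      simpa using this
    -- now conjugation
    have : φ v * φ (Monoid.CoprodI.of (i := j) χ') * (φ v)⁻¹
        = φ (Monoid.CoprodI.of (i := k) χ') := by
      rw [← hq]; simp only [map_mul, map_inv]
    rw [← heq] at this
    calc φ v * φ (Monoid.CoprodI.of (i := j) χ')
        = (φ v * φ (Monoid.CoprodI.of (i := j) χ') * (φ v)⁻¹) * φ v := by group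
      _ = φ (Monoid.CoprodI.of (i := j) χ') * φ v := by rw [this]
  intro z
  induction z using QuotientGroup.induction_on with
  | _ u =>
    show φ u * φ v = φ v * φ u
    induction u using Monoid.CoprodI.induction_on with
    | one => simp
    | of i χ => exact (hgen i χ).symm
    | mul x y hx hy =>
      rw [map_mul, mul_assoc, hy, ← mul_assoc, hx, mul_assoc]
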